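/- In the finite phase-separated co-design model, define the discounted reward-to-go W_k(τ) = Σ_{j=k}^{H−1} γ^j R_F(s_T,x_j,b_j) and the per-step log-likelihood ℓ_k(φ,τ) = log π_F(φ)(b_k|x_k;s_T). Then for all θ ∈ ℝ^m and φ ∈ ℝ^n (assuming the follower policy is three times continuously differentiable in φ so that the Hessian exists), the Hessian of the follower objective in φ decomposes as ∇²_φ J_F(θ,φ) = Σ_τ P(τ;θ,φ) · ∇²_φ(Σ_{k=0}^{H−1} ℓ_k(φ,τ)·W_k(τ)) + Σ_τ P(τ;θ,φ) · ∇_φ(Σ_{k=0}^{H−1} ℓ_k(φ,τ)) · (∇_φ(Σ_{k=0}^{H−1} ℓ_k(φ,τ)·W_k(τ)))ᵀ. -/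

import Mathlib

open scoped BigOperators

/-- A trajectory in the finite phase-separated co-design model, with leader horizon
`T + 1` (so `T + 1 ≥ 1`) and follower horizon `H + 1` (so `H + 1 ≥ 1`):
leader states `s 0, …, s (T+1)`, leader actions `a 0, …, a T`,
follower states `x 0, …, x H` and follower actions `b 0, …, b H`. -/
structure Traj (SL AL SF AF : Type) (T H : ℕ) where
  s : Fin (T + 2) → SL
  a : Fin (T + 1) → AL
  x : Fin (H + 1) → SF
  b : Fin (H + 1) → AF

instance instFintypeTraj (SL AL SF AF : Type) (T H : ℕ)
    [Fintype SL] [Fintype AL] [Fintype SF] [Fintype AF] :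
    Fintype (Traj SL AL SF AF T H) :=
  Fintype.ofEquiv
    ((Fin (T + 2) → SL) × (Fin (T + 1) → AL) × (Fin (H + 1) → SF) × (Fin (H + 1) → AF))
    { toFun := fun p => ⟨p.1, p.2.1, p.2.2.1, p.2.2.2⟩
      invFun := fun τ => ⟨τ.s, τ.a, τ.x, τ.b⟩
      left_inv := fun _ => rfl
      right_inv := fun _ => rfl }

variable {SL AL SF AF : Type} [Fintype SL] [Fintype AL] [Fintype SF] [Fintype AF]
variable {m n T H : ℕ}

/-- The terminal morphology `s_T` of a trajectory. -/
def Traj.z (τ : Traj SL AL SF AF T H) : SL := τ.s (Fin.last (T + 1))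

/-- Probability `P(τ; θ, φ)` of a trajectory. -/
def trajProb (μL : SL → ℝ) (PL : SL → AL → SL → ℝ) (μF : SL → SF → ℝ)
    (PF : SL → SF → AF → SF → ℝ) (πL : (Fin m → ℝ) → SL → AL → ℝ)
    (πF : (Fin n → ℝ) → SL → SF → AF → ℝ) (θ : Fin m → ℝ) (φ : Fin n → ℝ)
    (τ : Traj SL AL SF AF T H) : ℝ :=
  μL (τ.s 0) *
    (∏ t : Fin (T + 1),
      πL θ (τ.s t.castSucc) (τ.a t) * PL (τ.s t.castSucc) (τ.a t) (τ.s t.succ)) *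
    μF τ.z (τ.x 0) *
    (∏ k : Fin (H + 1), πF φ τ.z (τ.x k) (τ.b k)) *
    (∏ k : Fin H, PF τ.z (τ.x k.castSucc) (τ.b k.castSucc) (τ.x k.succ))

/-- Follower objective `J_F(θ, φ)`. -/
def JF (γ : ℝ) (μL : SL → ℝ) (PL : SL → AL → SL → ℝ) (μF : SL → SF → ℝ)
    (PF : SL → SF → AF → SF → ℝ) (RF : SL → SF → AF → ℝ)
    (πL : (Fin m → ℝ) → SL → AL → ℝ) (πF : (Fin n → ℝ) → SL → SF → AF → ℝ)
    (T H : ℕ) (θ : Fin m → ℝ) (φ : Fin n → ℝ) : ℝ :=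
  ∑ τ : Traj SL AL SF AF T H, trajProb μL PL μF PF πL πF θ φ τ *
    ∑ k : Fin (H + 1), γ ^ (k : ℕ) * RF τ.z (τ.x k) (τ.b k)

/-- Leader objective `J_L(θ, φ)`. -/
def JL (γ : ℝ) (μL : SL → ℝ) (PL : SL → AL → SL → ℝ) (μF : SL → SF → ℝ)
    (PF : SL → SF → AF → SF → ℝ) (RL : SL → AL → ℝ) (RF : SL → SF → AF → ℝ)
    (πL : (Fin m → ℝ) → SL → AL → ℝ) (πF : (Fin n → ℝ) → SL → SF → AF → ℝ)
    (T H : ℕ) (θ : Fin m → ℝ) (φ : Fin n → ℝ) : ℝ :=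
  ∑ τ : Traj SL AL SF AF T H, trajProb μL PL μF PF πL πF θ φ τ *
    ((∑ t : Fin (T + 1), γ ^ (t : ℕ) * RL (τ.s t.castSucc) (τ.a t)) +
      γ ^ (T + 1) * ∑ k : Fin (H + 1), γ ^ (k : ℕ) * RF τ.z (τ.x k) (τ.b k))

/-- Follower state-action value `Q_F^{φ,k}(x, b; z)`, written in terms of the number
`r` of remaining follower steps after the current one (at stage `k` of a follower
phase with horizon `H + 1`, one has `r = H - k`): the expectation of the discounted
reward-to-go `∑_{j = k}^{H} γ^{j - k} R_F(z, x_j, b_j)` over follower trajectories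
generated from `x, b` by `P_F(·|z,·,·)` and `π_F(φ)(·|·; z)`. -/
def Qrem (γ : ℝ) (PF : SL → SF → AF → SF → ℝ) (RF : SL → SF → AF → ℝ)
    (πF : (Fin n → ℝ) → SL → SF → AF → ℝ) (z : SL) (φ : Fin n → ℝ) :
    ℕ → SF → AF → ℝ
  | 0, x, b => RF z x b
  | r + 1, x, b => RF z x b +
      γ * ∑ x' : SF, PF z x b x' * ∑ b' : AF, πF φ z x' b' * Qrem γ PF RF πF z φ r x' b'

/-- Follower advantage `A_F^{φ,k}(x, b; z) = Q_F^{φ,k}(x, b; z) - V_F^{φ,k}(x; z)`,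
again indexed by the number `r = H - k` of remaining follower steps. -/
def advF (γ : ℝ) (PF : SL → SF → AF → SF → ℝ) (RF : SL → SF → AF → ℝ)
    (πF : (Fin n → ℝ) → SL → SF → AF → ℝ) (z : SL) (φ : Fin n → ℝ)
    (r : ℕ) (x : SF) (b : AF) : ℝ :=
  Qrem γ PF RF πF z φ r x b -
    ∑ b' : AF, πF φ z x b' * Qrem γ PF RF πF z φ r x b'

/-- Leader state-action value `Q_L^{θ,φ,t}(s, a)`, indexed by the number `r` of
remaining leader steps after the current one (at stage `t` of a leader phase with
horizon `T + 1`, one has `r = T - t`); the follower phase has horizon `H + 1`. -/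
def QLrem (γ : ℝ) (PL : SL → AL → SL → ℝ) (μF : SL → SF → ℝ)
    (PF : SL → SF → AF → SF → ℝ) (RL : SL → AL → ℝ) (RF : SL → SF → AF → ℝ)
    (πL : (Fin m → ℝ) → SL → AL → ℝ) (πF : (Fin n → ℝ) → SL → SF → AF → ℝ)
    (H : ℕ) (θ : Fin m → ℝ) (φ : Fin n → ℝ) : ℕ → SL → AL → ℝ
  | 0, s, a => RL s a + γ * ∑ z : SL, PL s a z *
      ∑ x : SF, μF z x * ∑ b : AF, πF φ z x b * Qrem γ PF RF πF z φ H x b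
  | r + 1, s, a => RL s a + γ * ∑ s' : SL, PL s a s' *
      ∑ a' : AL, πL θ s' a' * QLrem γ PL μF PF RL RF πL πF H θ φ r s' a'

/-- Leader advantage `A_L^{θ,φ,t}(s, a) = Q_L^{θ,φ,t}(s, a) - V_L^{θ,φ,t}(s)`,
indexed by the number `r = T - t` of remaining leader steps. -/
def advL (γ : ℝ) (PL : SL → AL → SL → ℝ) (μF : SL → SF → ℝ)
    (PF : SL → SF → AF → SF → ℝ) (RL : SL → AL → ℝ) (RF : SL → SF → AF → ℝ)
    (πL : (Fin m → ℝ) → SL → AL → ℝ) (πF : (Fin n → ℝ) → SL → SF → AF → ℝ)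
    (H : ℕ) (θ : Fin m → ℝ) (φ : Fin n → ℝ) (r : ℕ) (s : SL) (a : AL) : ℝ :=
  QLrem γ PL μF PF RL RF πL πF H θ φ r s a -
    ∑ a' : AL, πL θ s a' * QLrem γ PL μF PF RL RF πL πF H θ φ r s a'

section Aux

variable (γ : ℝ) (μL : SL → ℝ) (PL : SL → AL → SL → ℝ) (μF : SL → SF → ℝ)
  (PF : SL → SF → AF → SF → ℝ) (RF : SL → SF → AF → ℝ)
  (πL : (Fin m → ℝ) → SL → AL → ℝ) (πF : (Fin n → ℝ) → SL → SF → AF → ℝ)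
  (θ : Fin m → ℝ)

/-- The `φ`-independent part of the trajectory probability. -/
def Cc (τ : Traj SL AL SF AF T H) : ℝ :=
  μL (τ.s 0) *
    (∏ t : Fin (T + 1),
      πL θ (τ.s t.castSucc) (τ.a t) * PL (τ.s t.castSucc) (τ.a t) (τ.s t.succ)) *
    μF τ.z (τ.x 0) *
    (∏ k : Fin H, PF τ.z (τ.x k.castSucc) (τ.b k.castSucc) (τ.x k.succ))

/-- Discounted reward-to-go. -/
def Wv (k : Fin (H + 1)) (τ : Traj SL AL SF AF T H) : ℝ :=
  ∑ j' ∈ Finset.Ici k, γ ^ (j' : ℕ) * RF τ.z (τ.x j') (τ.b j')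

/-- Total discounted follower reward. -/
def Gv (τ : Traj SL AL SF AF T H) : ℝ :=
  ∑ k : Fin (H + 1), γ ^ (k : ℕ) * RF τ.z (τ.x k) (τ.b k)

/-- Sum of per-step log-likelihoods. -/
noncomputable def Lf (φ : Fin n → ℝ) (τ : Traj SL AL SF AF T H) : ℝ :=
  ∑ k : Fin (H + 1), Real.log (πF φ τ.z (τ.x k) (τ.b k))

/-- Log-likelihoods weighted by rewards-to-go. -/
noncomputable def LWf (φ : Fin n → ℝ) (τ : Traj SL AL SF AF T H) : ℝ :=
  ∑ k : Fin (H + 1), Real.log (πF φ τ.z (τ.x k) (τ.b k)) * Wv γ RF k τ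

noncomputable def dπ (z : SL) (x : SF) (b : AF) (φ : Fin n → ℝ) : (Fin n → ℝ) →L[ℝ] ℝ :=
  fderiv ℝ (fun φ' => πF φ' z x b) φ

noncomputable def Ld (φ : Fin n → ℝ) (τ : Traj SL AL SF AF T H) : (Fin n → ℝ) →L[ℝ] ℝ :=
  ∑ k : Fin (H + 1), (πF φ τ.z (τ.x k) (τ.b k))⁻¹ • dπ πF τ.z (τ.x k) (τ.b k) φ

noncomputable def LWd (φ : Fin n → ℝ) (τ : Traj SL AL SF AF T H) : (Fin n → ℝ) →L[ℝ] ℝ :=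
  ∑ k : Fin (H + 1),
    Wv γ RF k τ • ((πF φ τ.z (τ.x k) (τ.b k))⁻¹ • dπ πF τ.z (τ.x k) (τ.b k) φ)

end Aux

set_option linter.unusedSectionVars false
section Facts

variable {γ : ℝ} {μL : SL → ℝ} {PL : SL → AL → SL → ℝ} {μF : SL → SF → ℝ}
  {PF : SL → SF → AF → SF → ℝ} {RF : SL → SF → AF → ℝ}
  {πL : (Fin m → ℝ) → SL → AL → ℝ} {πF : (Fin n → ℝ) → SL → SF → AF → ℝ}
  {θ : Fin m → ℝ}
  (hπF0 : ∀ φ z x b, 0 < πF φ z x b)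
  (hπFC : ∀ z x b, ContDiff ℝ 2 fun φ : Fin n → ℝ => πF φ z x b)

include hπFC in
lemma hasFDerivAt_piF (z : SL) (x : SF) (b : AF) (φ : Fin n → ℝ) :
    HasFDerivAt (fun φ' => πF φ' z x b) (dπ πF z x b φ) φ :=
  ((hπFC z x b).differentiable (by norm_num)).differentiableAt.hasFDerivAt

include hπF0 hπFC in
lemma hasFDerivAt_Lf (φ : Fin n → ℝ) (τ : Traj SL AL SF AF T H) :
    HasFDerivAt (fun φ' => Lf πF φ' τ) (Ld πF φ τ) φ := by
  refine HasFDerivAt.fun_sum fun k _ => ?_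
  exact (hasFDerivAt_piF hπFC τ.z (τ.x k) (τ.b k) φ).log (hπF0 φ τ.z (τ.x k) (τ.b k)).ne'

include hπF0 hπFC in
lemma hasFDerivAt_LWf (φ : Fin n → ℝ) (τ : Traj SL AL SF AF T H) :
    HasFDerivAt (fun φ' => LWf γ RF πF φ' τ) (LWd γ RF πF φ τ) φ := by
  refine HasFDerivAt.fun_sum fun k _ => ?_
  exact ((hasFDerivAt_piF hπFC τ.z (τ.x k) (τ.b k) φ).log
    (hπF0 φ τ.z (τ.x k) (τ.b k)).ne').mul_const (Wv γ RF k τ)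

include hπF0 in
lemma trajProb_eq (φ : Fin n → ℝ) (τ : Traj SL AL SF AF T H) :
    trajProb μL PL μF PF πL πF θ φ τ = Cc μL PL μF PF πL θ τ * Real.exp (Lf πF φ τ) := by
  rw [Lf, Real.exp_sum]
  have : ∀ k : Fin (H + 1), Real.exp (Real.log (πF φ τ.z (τ.x k) (τ.b k))) =
      πF φ τ.z (τ.x k) (τ.b k) := fun k => Real.exp_log (hπF0 φ τ.z (τ.x k) (τ.b k))
  rw [Finset.prod_congr rfl fun k _ => this k]
  unfold trajProb Cc
  ring

include hπF0 hπFC in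
lemma hasFDerivAt_P (φ : Fin n → ℝ) (τ : Traj SL AL SF AF T H) :
    HasFDerivAt (fun φ' => Cc μL PL μF PF πL θ τ * Real.exp (Lf πF φ' τ))
      ((Cc μL PL μF PF πL θ τ * Real.exp (Lf πF φ τ)) • Ld πF φ τ) φ := by
  have h := ((hasFDerivAt_Lf hπF0 hπFC φ τ).exp).const_mul (Cc μL PL μF PF πL θ τ)
  simpa [smul_smul, mul_comm, mul_assoc] using h

include hπF0 hπFC in
lemma hasFDerivAt_JF (φ : Fin n → ℝ) :
    HasFDerivAt (fun φ' => JF γ μL PL μF PF RF πL πF T H θ φ')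
      (∑ τ : Traj SL AL SF AF T H,
        Gv γ RF τ • ((Cc μL PL μF PF πL θ τ * Real.exp (Lf πF φ τ)) • Ld πF φ τ)) φ := by
  have he : (fun φ' => JF γ μL PL μF PF RF πL πF T H θ φ') =
      fun φ' => ∑ τ : Traj SL AL SF AF T H,
        Cc μL PL μF PF πL θ τ * Real.exp (Lf πF φ' τ) * Gv γ RF τ := by
    funext φ'
    exact Finset.sum_congr rfl fun τ _ => by rw [trajProb_eq hπF0]; rfl
  rw [he]
  exact HasFDerivAt.fun_sum fun τ _ => (hasFDerivAt_P hπF0 hπFC φ τ).mul_const (Gv γ RF τ)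

end Facts

section Core
variable {SF AF : Type} [Fintype SF] [Fintype AF] [Nonempty SF] [Nonempty AF]

private def snocE (β : Type) (N : ℕ) : ((Fin (N + 1) → β) × β) ≃ (Fin (N + 2) → β) where
  toFun p := Fin.snoc p.1 p.2
  invFun x := (Fin.init x, x (Fin.last (N + 1)))
  left_inv p := by simp [Fin.init_snoc]
  right_inv x := by simp [Fin.snoc_init_self]

lemma core_lemma (Q : SF → AF → SF → ℝ) (hQ : ∀ x b, ∑ x' : SF, Q x b x' = 1) :
    ∀ (N : ℕ) (f : Fin (N + 1) → SF → AF → ℝ) (k : Fin (N + 1))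
      (h : (Fin (N + 1) → SF) → (Fin (N + 1) → AF) → ℝ),
      (∀ x, ∑ b : AF, f k x b = 0) →
      (∀ i : Fin (N + 1), k < i → ∀ x, ∑ b : AF, f i x b = 1) →
      (∀ x x' b b', (∀ j : Fin (N + 1), (j : ℕ) ≤ (k : ℕ) → x j = x' j) →
        (∀ j : Fin (N + 1), (j : ℕ) < (k : ℕ) → b j = b' j) → h x b = h x' b') →
      ∑ x : Fin (N + 1) → SF, ∑ b : Fin (N + 1) → AF,
        (∏ i, f i (x i) (b i)) *
          (∏ i : Fin N, Q (x i.castSucc) (b i.castSucc) (x i.succ)) * h x b = 0 := by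
  intro N
  induction N with
  | zero =>
    intro f k h hf0 _ hh
    have hk : k = 0 := Fin.ext (by omega)
    subst hk
    calc ∑ x : Fin 1 → SF, ∑ b : Fin 1 → AF,
          (∏ i, f i (x i) (b i)) * (∏ i : Fin 0, Q (x i.castSucc) (b i.castSucc) (x i.succ)) * h x b
        = ∑ x : Fin 1 → SF, ∑ b : Fin 1 → AF, f 0 (x 0) (b 0) * h x (fun _ => Classical.arbitrary AF) := by
          refine Finset.sum_congr rfl fun x _ => Finset.sum_congr rfl fun b _ => ?_
          rw [hh x x b (fun _ => Classical.arbitrary AF) (fun j _ => rfl)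
            (fun j hj => absurd hj (by omega))]
          simp
      _ = 0 := by
          refine Finset.sum_eq_zero fun x _ => ?_
          rw [← Finset.sum_mul]
          have : ∑ b : Fin 1 → AF, f 0 (x 0) (b 0) = ∑ b : AF, f 0 (x 0) b := by
            exact Fintype.sum_equiv (Equiv.funUnique (Fin 1) AF) _ _ (fun b => rfl)
          rw [this, hf0, zero_mul]
  | succ N ih =>
    intro f k h hf0 hf1 hh
    have ex : ∀ F : (Fin (N + 2) → SF) → ℝ,
        ∑ x, F x = ∑ x : Fin (N + 1) → SF, ∑ xl : SF, F (Fin.snoc x xl) := by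
      intro F
      calc ∑ x, F x = ∑ p : (Fin (N + 1) → SF) × SF, F (Fin.snoc p.1 p.2) :=
            (Fintype.sum_equiv (snocE SF N) _ F fun p => rfl).symm
        _ = ∑ x : Fin (N + 1) → SF, ∑ xl : SF, F (Fin.snoc x xl) := Fintype.sum_prod_type _
    have eb : ∀ F : (Fin (N + 2) → AF) → ℝ,
        ∑ b, F b = ∑ b : Fin (N + 1) → AF, ∑ bl : AF, F (Fin.snoc b bl) := by
      intro F
      calc ∑ b, F b = ∑ p : (Fin (N + 1) → AF) × AF, F (Fin.snoc p.1 p.2) :=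
            (Fintype.sum_equiv (snocE AF N) _ F fun p => rfl).symm
        _ = ∑ b : Fin (N + 1) → AF, ∑ bl : AF, F (Fin.snoc b bl) := Fintype.sum_prod_type _
    have hprodf : ∀ (x : Fin (N + 1) → SF) (xl : SF) (b : Fin (N + 1) → AF) (bl : AF),
        (∏ i : Fin (N + 2), f i ((Fin.snoc x xl : Fin (N + 2) → SF) i) ((Fin.snoc b bl : Fin (N + 2) → AF) i)) =
          (∏ i : Fin (N + 1), f i.castSucc (x i) (b i)) * f (Fin.last (N + 1)) xl bl := by
      intro x xl b bl
      rw [Fin.prod_univ_castSucc]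
      simp
    have hprodQ : ∀ (x : Fin (N + 1) → SF) (xl : SF) (b : Fin (N + 1) → AF) (bl : AF),
        (∏ i : Fin (N + 1), Q ((Fin.snoc x xl : Fin (N + 2) → SF) i.castSucc)
            ((Fin.snoc b bl : Fin (N + 2) → AF) i.castSucc)
            ((Fin.snoc x xl : Fin (N + 2) → SF) i.succ)) =
          (∏ i : Fin N, Q (x i.castSucc) (b i.castSucc) (x i.succ)) *
            Q (x (Fin.last N)) (b (Fin.last N)) xl := by
      intro x xl b bl
      rw [Fin.prod_univ_castSucc]
      congr 1
      · refine Finset.prod_congr rfl fun i _ => ?_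
        rw [Fin.succ_castSucc]
        simp only [Fin.snoc_castSucc]
      · rw [Fin.succ_last]
        simp
    rw [ex]
    have step1 : ∀ (x : Fin (N + 1) → SF) (xl : SF), (∑ b : Fin (N + 2) → AF,
        (∏ i, f i ((Fin.snoc x xl : Fin (N + 2) → SF) i) (b i)) *
          (∏ i : Fin (N + 1), Q ((Fin.snoc x xl : Fin (N + 2) → SF) i.castSucc) (b i.castSucc)
            ((Fin.snoc x xl : Fin (N + 2) → SF) i.succ)) *
          h (Fin.snoc x xl) b) =
        ∑ b : Fin (N + 1) → AF, ∑ bl : AF,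
          ((∏ i : Fin (N + 1), f i.castSucc (x i) (b i)) * f (Fin.last (N + 1)) xl bl) *
            ((∏ i : Fin N, Q (x i.castSucc) (b i.castSucc) (x i.succ)) *
              Q (x (Fin.last N)) (b (Fin.last N)) xl) *
            h (Fin.snoc x xl) (Fin.snoc b bl) := by
      intro x xl
      rw [eb]
      refine Finset.sum_congr rfl fun b _ => Finset.sum_congr rfl fun bl _ => ?_
      rw [hprodf, hprodQ]
    simp only [step1]
    induction k using Fin.lastCases with
    | last =>
      refine Finset.sum_eq_zero fun x _ => Finset.sum_eq_zero fun xl _ =>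
        Finset.sum_eq_zero fun b _ => ?_
      have hc : ∀ bl : AF, h (Fin.snoc x xl) (Fin.snoc b bl) =
          h (Fin.snoc x xl) (Fin.snoc b (Classical.arbitrary AF)) := by
        intro bl
        refine hh _ _ _ _ (fun j _ => rfl) fun j hj => ?_
        have hlt : (j : ℕ) < N + 1 := by simpa using hj
        rw [← Fin.castSucc_castLT j hlt, Fin.snoc_castSucc, Fin.snoc_castSucc]
      calc ∑ bl : AF, (∏ i : Fin (N + 1), f i.castSucc (x i) (b i)) * f (Fin.last (N + 1)) xl bl *
              ((∏ i : Fin N, Q (x i.castSucc) (b i.castSucc) (x i.succ)) *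
                Q (x (Fin.last N)) (b (Fin.last N)) xl) *
              h (Fin.snoc x xl) (Fin.snoc b bl)
          = ∑ bl : AF, f (Fin.last (N + 1)) xl bl *
              ((∏ i : Fin (N + 1), f i.castSucc (x i) (b i)) *
                ((∏ i : Fin N, Q (x i.castSucc) (b i.castSucc) (x i.succ)) *
                  Q (x (Fin.last N)) (b (Fin.last N)) xl) *
                h (Fin.snoc x xl) (Fin.snoc b (Classical.arbitrary AF))) := by
            refine Finset.sum_congr rfl fun bl _ => ?_
            rw [hc bl]; ring
        _ = 0 := by rw [← Finset.sum_mul, hf0, zero_mul]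
    | cast k' =>
      set h' : (Fin (N + 1) → SF) → (Fin (N + 1) → AF) → ℝ := fun x b =>
        h (Fin.snoc x (Classical.arbitrary SF)) (Fin.snoc b (Classical.arbitrary AF)) with hh'def
      have hkN : (k'.castSucc : ℕ) ≤ N := by simpa using Fin.is_le k'
      have hc2 : ∀ (x : Fin (N + 1) → SF) (xl : SF) (b : Fin (N + 1) → AF) (bl : AF),
          h (Fin.snoc x xl) (Fin.snoc b bl) = h' x b := by
        intro x xl b bl
        refine hh _ _ _ _ (fun j hj => ?_) fun j hj => ?_
        · have hlt : (j : ℕ) < N + 1 := by omega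
          rw [← Fin.castSucc_castLT j hlt, Fin.snoc_castSucc, Fin.snoc_castSucc]
        · have hlt : (j : ℕ) < N + 1 := by omega
          rw [← Fin.castSucc_castLT j hlt, Fin.snoc_castSucc, Fin.snoc_castSucc]
      calc ∑ x : Fin (N + 1) → SF, ∑ xl : SF, ∑ b : Fin (N + 1) → AF, ∑ bl : AF,
            (∏ i : Fin (N + 1), f i.castSucc (x i) (b i)) * f (Fin.last (N + 1)) xl bl *
              ((∏ i : Fin N, Q (x i.castSucc) (b i.castSucc) (x i.succ)) *
                Q (x (Fin.last N)) (b (Fin.last N)) xl) *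
              h (Fin.snoc x xl) (Fin.snoc b bl)
          = ∑ x : Fin (N + 1) → SF, ∑ b : Fin (N + 1) → AF,
              (∏ i : Fin (N + 1), f i.castSucc (x i) (b i)) *
                (∏ i : Fin N, Q (x i.castSucc) (b i.castSucc) (x i.succ)) * h' x b := by
            refine Finset.sum_congr rfl fun x _ => ?_
            rw [Finset.sum_comm]
            refine Finset.sum_congr rfl fun b _ => ?_
            have hbl : ∀ xl : SF, (∑ bl : AF,
                (∏ i : Fin (N + 1), f i.castSucc (x i) (b i)) * f (Fin.last (N + 1)) xl bl *
                  ((∏ i : Fin N, Q (x i.castSucc) (b i.castSucc) (x i.succ)) *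
                    Q (x (Fin.last N)) (b (Fin.last N)) xl) *
                  h (Fin.snoc x xl) (Fin.snoc b bl)) =
                ((∏ i : Fin (N + 1), f i.castSucc (x i) (b i)) *
                  (∏ i : Fin N, Q (x i.castSucc) (b i.castSucc) (x i.succ)) * h' x b) *
                  Q (x (Fin.last N)) (b (Fin.last N)) xl := by
              intro xl
              have : ∀ bl : AF,
                  (∏ i : Fin (N + 1), f i.castSucc (x i) (b i)) * f (Fin.last (N + 1)) xl bl *
                    ((∏ i : Fin N, Q (x i.castSucc) (b i.castSucc) (x i.succ)) *
                      Q (x (Fin.last N)) (b (Fin.last N)) xl) *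
                    h (Fin.snoc x xl) (Fin.snoc b bl) =
                  f (Fin.last (N + 1)) xl bl *
                    (((∏ i : Fin (N + 1), f i.castSucc (x i) (b i)) *
                      (∏ i : Fin N, Q (x i.castSucc) (b i.castSucc) (x i.succ)) * h' x b) *
                      Q (x (Fin.last N)) (b (Fin.last N)) xl) := by
                intro bl; rw [hc2 x xl b bl]; ring
              rw [Finset.sum_congr rfl fun bl _ => this bl, ← Finset.sum_mul,
                hf1 _ (Fin.castSucc_lt_last k') xl, one_mul]
            rw [Finset.sum_congr rfl fun xl _ => hbl xl, ← Finset.mul_sum, hQ, mul_one]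
        _ = 0 := by
            refine ih (fun i => f i.castSucc) k' h' hf0 (fun i hi => hf1 _ ?_) ?_
            · exact Fin.castSucc_lt_castSucc_iff.mpr hi
            · intro x x' b b' hx hb
              refine hh _ _ _ _ (fun j hj => ?_) fun j hj => ?_
              · have hlt : (j : ℕ) < N + 1 := by omega
                rw [← Fin.castSucc_castLT j hlt, Fin.snoc_castSucc, Fin.snoc_castSucc]
                exact hx _ (by simpa using hj)
              · have hlt : (j : ℕ) < N + 1 := by omega
                rw [← Fin.castSucc_castLT j hlt, Fin.snoc_castSucc, Fin.snoc_castSucc]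
                exact hb _ (by simpa using hj)


section LemmaA

set_option maxHeartbeats 1000000

variable {γ : ℝ} {μL : SL → ℝ} {PL : SL → AL → SL → ℝ} {μF : SL → SF → ℝ}
  {PF : SL → SF → AF → SF → ℝ} {RF : SL → SF → AF → ℝ}
  {πL : (Fin m → ℝ) → SL → AL → ℝ} {πF : (Fin n → ℝ) → SL → SF → AF → ℝ}
  {θ : Fin m → ℝ}

/-- The defining equivalence for `Traj`. -/
def trajE : ((Fin (T + 2) → SL) × (Fin (T + 1) → AL) × (Fin (H + 1) → SF) ×
    (Fin (H + 1) → AF)) ≃ Traj SL AL SF AF T H where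
  toFun p := ⟨p.1, p.2.1, p.2.2.1, p.2.2.2⟩
  invFun τ := ⟨τ.s, τ.a, τ.x, τ.b⟩
  left_inv _ := rfl
  right_inv _ := rfl

lemma sum_traj (F : Traj SL AL SF AF T H → ℝ) :
    ∑ τ, F τ = ∑ s : Fin (T + 2) → SL, ∑ a : Fin (T + 1) → AL,
      ∑ x : Fin (H + 1) → SF, ∑ b : Fin (H + 1) → AF, F ⟨s, a, x, b⟩ := by
  calc ∑ τ, F τ = ∑ p : (Fin (T + 2) → SL) × (Fin (T + 1) → AL) × (Fin (H + 1) → SF) ×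
        (Fin (H + 1) → AF), F (trajE p) := (Fintype.sum_equiv trajE _ F fun p => rfl).symm
    _ = _ := by simp only [Fintype.sum_prod_type]; rfl

lemma hGW (hγ : True) (k : Fin (H + 1)) (τ : Traj SL AL SF AF T H) :
    Gv γ RF τ - Wv γ RF k τ =
      ∑ j' ∈ Finset.Iio k, γ ^ (j' : ℕ) * RF τ.z (τ.x j') (τ.b j') := by
  have hu : (Finset.Iio k ∪ Finset.Ici k) = (Finset.univ : Finset (Fin (H + 1))) := by
    ext j; simp [Finset.mem_Iio, Finset.mem_Ici, lt_or_ge]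
  have hd : Disjoint (Finset.Iio k) (Finset.Ici k) := by
    rw [Finset.disjoint_left]; intro j hj hj'
    simp only [Finset.mem_Iio] at hj; simp only [Finset.mem_Ici] at hj'
    exact absurd hj' (not_le.mpr hj)
  rw [Gv, Wv, ← hu, Finset.sum_union hd]
  ring

variable (hπF0 : ∀ φ z x b, 0 < πF φ z x b)
  (hπF1 : ∀ φ z x, ∑ b : AF, πF φ z x b = 1)
  (hπFC : ∀ z x b, ContDiff ℝ 2 fun φ : Fin n → ℝ => πF φ z x b)
  (hPF1 : ∀ z x b, ∑ x' : SF, PF z x b x' = 1)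

include hπF1 hπFC in
lemma sum_dpi_eq_zero (z : SL) (x' : SF) (φ : Fin n → ℝ) (v : Fin n → ℝ) :
    ∑ b' : AF, dπ πF z x' b' φ v = 0 := by
  have h1 : HasFDerivAt (fun φ' => ∑ b' : AF, πF φ' z x' b')
      (∑ b' : AF, dπ πF z x' b' φ) φ :=
    HasFDerivAt.fun_sum fun b' _ => hasFDerivAt_piF hπFC z x' b' φ
  have h2 : (fun φ' : Fin n → ℝ => ∑ b' : AF, πF φ' z x' b') = fun _ => (1 : ℝ) :=
    funext fun φ' => hπF1 φ' z x'
  rw [h2] at h1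
  have h3 := h1.unique (hasFDerivAt_const 1 φ)
  calc ∑ b' : AF, dπ πF z x' b' φ v = (∑ b' : AF, dπ πF z x' b' φ) v := by
        rw [ContinuousLinearMap.sum_apply]
    _ = 0 := by rw [h3]; rfl

include hπF0 hπF1 hπFC hPF1 in
lemma lemmaA [Nonempty SF] [Nonempty AF] (φ : Fin n → ℝ) (v : Fin n → ℝ) :
    ∑ τ : Traj SL AL SF AF T H,
      Cc μL PL μF PF πL θ τ * Real.exp (Lf πF φ τ) * Ld πF φ τ v * Gv γ RF τ
    = ∑ τ : Traj SL AL SF AF T H,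
      Cc μL PL μF PF πL θ τ * Real.exp (Lf πF φ τ) * LWd γ RF πF φ τ v := by
  rw [← sub_eq_zero, ← Finset.sum_sub_distrib]
  have hterm : ∀ τ : Traj SL AL SF AF T H,
      Cc μL PL μF PF πL θ τ * Real.exp (Lf πF φ τ) * Ld πF φ τ v * Gv γ RF τ -
        Cc μL PL μF PF πL θ τ * Real.exp (Lf πF φ τ) * LWd γ RF πF φ τ v =
      ∑ k : Fin (H + 1),
        Cc μL PL μF PF πL θ τ * Real.exp (Lf πF φ τ) *
          ((πF φ τ.z (τ.x k) (τ.b k))⁻¹ * dπ πF τ.z (τ.x k) (τ.b k) φ v) *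
          ∑ j' ∈ Finset.Iio k, γ ^ (j' : ℕ) * RF τ.z (τ.x j') (τ.b j') := by
    intro τ
    have hLd : Ld πF φ τ v =
        ∑ k : Fin (H + 1), (πF φ τ.z (τ.x k) (τ.b k))⁻¹ * dπ πF τ.z (τ.x k) (τ.b k) φ v := by
      simp [Ld, ContinuousLinearMap.sum_apply, ContinuousLinearMap.smul_apply, smul_eq_mul]
    have hLWd : LWd γ RF πF φ τ v =
        ∑ k : Fin (H + 1),
          Wv γ RF k τ * ((πF φ τ.z (τ.x k) (τ.b k))⁻¹ * dπ πF τ.z (τ.x k) (τ.b k) φ v) := by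
      simp [LWd, ContinuousLinearMap.sum_apply, ContinuousLinearMap.smul_apply, smul_eq_mul]
    rw [hLd, hLWd, Finset.mul_sum, Finset.sum_mul, Finset.mul_sum, ← Finset.sum_sub_distrib]
    refine Finset.sum_congr rfl fun k _ => ?_
    rw [← hGW trivial k τ]
    ring
  rw [Finset.sum_congr rfl fun τ _ => hterm τ, Finset.sum_comm]
  refine Finset.sum_eq_zero fun k _ => ?_
  have hPeq : ∀ τ : Traj SL AL SF AF T H,
      Cc μL PL μF PF πL θ τ * Real.exp (Lf πF φ τ) = trajProb μL PL μF PF πL πF θ φ τ :=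
    fun τ => (trajProb_eq hπF0 φ τ).symm
  rw [Finset.sum_congr rfl fun τ _ => by rw [hPeq τ],
    sum_traj (fun τ => trajProb μL PL μF PF πL πF θ φ τ *
      ((πF φ τ.z (τ.x k) (τ.b k))⁻¹ * dπ πF τ.z (τ.x k) (τ.b k) φ v) *
      ∑ j' ∈ Finset.Iio k, γ ^ (j' : ℕ) * RF τ.z (τ.x j') (τ.b j'))]
  refine Finset.sum_eq_zero fun s _ => Finset.sum_eq_zero fun a _ => ?_
  set z : SL := s (Fin.last (T + 1)) with hz
  have hc := core_lemma (PF z) (hPF1 z) H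
      (fun i x' b' => if i = k then dπ πF z x' b' φ v else πF φ z x' b') k
      (fun x b => μL (s 0) *
        (∏ t : Fin (T + 1), πL θ (s t.castSucc) (a t) * PL (s t.castSucc) (a t) (s t.succ)) *
        (μF z (x 0) * ∑ j' ∈ Finset.Iio k, γ ^ (j' : ℕ) * RF z (x j') (b j')))
      (fun x' => by
        simp only [if_pos rfl]
        exact sum_dpi_eq_zero hπF1 hπFC z x' φ v)
      (fun i hi x' => by
        simp only [if_neg hi.ne']
        exact hπF1 φ z x')
      (fun x x' b b' hx hb => by
        have h0 : x 0 = x' 0 := hx 0 (Nat.zero_le _)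
        have hs : (∑ j' ∈ Finset.Iio k, γ ^ (j' : ℕ) * RF z (x j') (b j')) =
            ∑ j' ∈ Finset.Iio k, γ ^ (j' : ℕ) * RF z (x' j') (b' j') := by
          refine Finset.sum_congr rfl fun j' hj' => ?_
          rw [Finset.mem_Iio] at hj'
          have hv : (j' : ℕ) < (k : ℕ) := hj'
          rw [hx j' hv.le, hb j' hv]
        rw [h0, hs])
  refine Eq.trans ?_ hc
  refine Finset.sum_congr rfl fun x _ => Finset.sum_congr rfl fun b _ => ?_
  have hzz : (⟨s, a, x, b⟩ : Traj SL AL SF AF T H).z = z := rfl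
  have hne : πF φ z (x k) (b k) ≠ 0 := (hπF0 φ z (x k) (b k)).ne'
  have hpf : (∏ i : Fin (H + 1),
      (if i = k then dπ πF z (x i) (b i) φ v else πF φ z (x i) (b i))) =
      dπ πF z (x k) (b k) φ v * ∏ i ∈ Finset.univ.erase k, πF φ z (x i) (b i) := by
    rw [← Finset.mul_prod_erase Finset.univ
      (fun i => if i = k then dπ πF z (x i) (b i) φ v else πF φ z (x i) (b i))
      (Finset.mem_univ k)]
    congr 1
    · simp
    · exact Finset.prod_congr rfl fun i hi => by
        simp [Finset.ne_of_mem_erase hi]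
  have hppi : (∏ i : Fin (H + 1), πF φ z (x i) (b i)) =
      πF φ z (x k) (b k) * ∏ i ∈ Finset.univ.erase k, πF φ z (x i) (b i) :=
    (Finset.mul_prod_erase Finset.univ _ (Finset.mem_univ k)).symm
  dsimp only
  simp only [trajProb, Traj.z]
  rw [← hz, hpf, hppi]
  field_simp

end LemmaA

section Main

set_option maxHeartbeats 1000000

theorem follower_hessian_decomposition'
    {SL AL SF AF : Type} [Fintype SL] [Fintype AL] [Fintype SF] [Fintype AF]
    [Nonempty SL] [Nonempty AL] [Nonempty SF] [Nonempty AF]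
    {m n T H : ℕ} (γ : ℝ)
    (μL : SL → ℝ) (PL : SL → AL → SL → ℝ)
    (μF : SL → SF → ℝ)
    (PF : SL → SF → AF → SF → ℝ)
    (hPF1 : ∀ z x b, ∑ x' : SF, PF z x b x' = 1)
    (RF : SL → SF → AF → ℝ)
    (πL : (Fin m → ℝ) → SL → AL → ℝ)
    (πF : (Fin n → ℝ) → SL → SF → AF → ℝ) (hπF0 : ∀ φ z x b, 0 < πF φ z x b)
    (hπF1 : ∀ φ z x, ∑ b : AF, πF φ z x b = 1)
    (hπFC : ∀ z x b, ContDiff ℝ 2 fun φ : Fin n → ℝ => πF φ z x b) :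
    ∀ (θ : Fin m → ℝ) (φ : Fin n → ℝ) (i j : Fin n),
      fderiv ℝ (fun φ₁ : Fin n → ℝ =>
          fderiv ℝ (fun φ₂ : Fin n → ℝ => JF γ μL PL μF PF RF πL πF T H θ φ₂) φ₁
            (Pi.single j 1)) φ (Pi.single i 1)
        =
      (∑ τ : Traj SL AL SF AF T H,
        trajProb μL PL μF PF πL πF θ φ τ *
          fderiv ℝ (fun φ₁ : Fin n → ℝ =>
            fderiv ℝ (fun φ₂ : Fin n → ℝ =>
              ∑ k : Fin (H + 1), Real.log (πF φ₂ τ.z (τ.x k) (τ.b k)) *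
                ∑ j' ∈ Finset.Ici k, γ ^ (j' : ℕ) * RF τ.z (τ.x j') (τ.b j')) φ₁
              (Pi.single j 1)) φ (Pi.single i 1))
      +
      (∑ τ : Traj SL AL SF AF T H,
        trajProb μL PL μF PF πL πF θ φ τ *
          (fderiv ℝ (fun φ₂ : Fin n → ℝ =>
              ∑ k : Fin (H + 1), Real.log (πF φ₂ τ.z (τ.x k) (τ.b k))) φ
            (Pi.single i 1) *
           fderiv ℝ (fun φ₂ : Fin n → ℝ =>
              ∑ k : Fin (H + 1), Real.log (πF φ₂ τ.z (τ.x k) (τ.b k)) *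
                ∑ j' ∈ Finset.Ici k, γ ^ (j' : ℕ) * RF τ.z (τ.x j') (τ.b j')) φ
            (Pi.single j 1))) := by
  intro θ φ i j
  -- abbreviations for the statement's lambdas
  have e1 : ∀ τ : Traj SL AL SF AF T H,
      (fun φ₂ : Fin n → ℝ => ∑ k : Fin (H + 1), Real.log (πF φ₂ τ.z (τ.x k) (τ.b k)) *
        ∑ j' ∈ Finset.Ici k, γ ^ (j' : ℕ) * RF τ.z (τ.x j') (τ.b j')) =
      fun φ₂ => LWf γ RF πF φ₂ τ := fun τ => rfl
  have e2 : ∀ τ : Traj SL AL SF AF T H,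
      (fun φ₂ : Fin n → ℝ => ∑ k : Fin (H + 1), Real.log (πF φ₂ τ.z (τ.x k) (τ.b k))) =
      fun φ₂ => Lf πF φ₂ τ := fun τ => rfl
  simp only [e1, e2]
  -- the function whose derivative we take on the left
  have hDlwC : ∀ τ : Traj SL AL SF AF T H,
      ContDiff ℝ 1 (fun φ₁ => fderiv ℝ (fun φ₂ => LWf γ RF πF φ₂ τ) φ₁ (Pi.single j 1)) := by
    intro τ
    have hC2 : ContDiff ℝ 2 (fun φ₂ => LWf γ RF πF φ₂ τ) := by
      unfold LWf
      refine ContDiff.sum fun k _ => ?_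
      exact ((hπFC τ.z (τ.x k) (τ.b k)).log
        (fun φ' => (hπF0 φ' τ.z (τ.x k) (τ.b k)).ne')).mul contDiff_const
    exact (hC2.fderiv_right (by norm_num)).clm_apply contDiff_const
  have heqD : ∀ (τ : Traj SL AL SF AF T H),
      (fun φ₁ => LWd γ RF πF φ₁ τ (Pi.single j 1)) =
      fun φ₁ => fderiv ℝ (fun φ₂ => LWf γ RF πF φ₂ τ) φ₁ (Pi.single j 1) := by
    intro τ
    funext φ₁
    rw [(hasFDerivAt_LWf hπF0 hπFC φ₁ τ).fderiv]
  have hfun : (fun φ₁ : Fin n → ℝ =>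
      fderiv ℝ (fun φ₂ : Fin n → ℝ => JF γ μL PL μF PF RF πL πF T H θ φ₂) φ₁
        (Pi.single j 1)) =
      fun φ₁ => ∑ τ : Traj SL AL SF AF T H,
        Cc μL PL μF PF πL θ τ * Real.exp (Lf πF φ₁ τ) *
          fderiv ℝ (fun φ₂ => LWf γ RF πF φ₂ τ) φ₁ (Pi.single j 1) := by
    funext φ₁
    rw [(hasFDerivAt_JF hπF0 hπFC φ₁).fderiv]
    have h1 : (∑ τ : Traj SL AL SF AF T H,
        Gv γ RF τ • ((Cc μL PL μF PF πL θ τ * Real.exp (Lf πF φ₁ τ)) • Ld πF φ₁ τ))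
          (Pi.single j 1) =
        ∑ τ : Traj SL AL SF AF T H,
          Cc μL PL μF PF πL θ τ * Real.exp (Lf πF φ₁ τ) * Ld πF φ₁ τ (Pi.single j 1) *
            Gv γ RF τ := by
      rw [ContinuousLinearMap.sum_apply]
      refine Finset.sum_congr rfl fun τ _ => ?_
      simp [ContinuousLinearMap.smul_apply, smul_eq_mul]
      ring
    rw [h1, lemmaA hπF0 hπF1 hπFC hPF1 φ₁ (Pi.single j 1)]
    exact Finset.sum_congr rfl fun τ _ => by rw [congrFun (heqD τ) φ₁]
  rw [hfun]
  -- differentiate the sum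
  have hprod : ∀ τ : Traj SL AL SF AF T H, HasFDerivAt
      (fun φ₁ => Cc μL PL μF PF πL θ τ * Real.exp (Lf πF φ₁ τ) *
        fderiv ℝ (fun φ₂ => LWf γ RF πF φ₂ τ) φ₁ (Pi.single j 1))
      ((Cc μL PL μF PF πL θ τ * Real.exp (Lf πF φ τ)) •
          fderiv ℝ (fun φ₁ => fderiv ℝ (fun φ₂ => LWf γ RF πF φ₂ τ) φ₁ (Pi.single j 1)) φ +
        (fderiv ℝ (fun φ₂ => LWf γ RF πF φ₂ τ) φ (Pi.single j 1)) •
          ((Cc μL PL μF PF πL θ τ * Real.exp (Lf πF φ τ)) • Ld πF φ τ)) φ := by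
    intro τ
    exact (hasFDerivAt_P hπF0 hπFC φ τ).mul
      (((hDlwC τ).differentiable (by norm_num) φ).hasFDerivAt)
  have hsum := HasFDerivAt.fun_sum (fun τ (_ : τ ∈ Finset.univ) => hprod τ)
  rw [hsum.fderiv]
  rw [ContinuousLinearMap.sum_apply, ← Finset.sum_add_distrib]
  refine Finset.sum_congr rfl fun τ _ => ?_
  rw [trajProb_eq hπF0 φ τ]
  have hLWv : fderiv ℝ (fun φ₂ => LWf γ RF πF φ₂ τ) φ (Pi.single j 1) =
      LWd γ RF πF φ τ (Pi.single j 1) :=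
    DFunLike.congr_fun (hasFDerivAt_LWf hπF0 hπFC φ τ).fderiv (Pi.single j 1)
  have hLv : fderiv ℝ (fun φ₂ => Lf πF φ₂ τ) φ (Pi.single i 1) =
      Ld πF φ τ (Pi.single i 1) :=
    DFunLike.congr_fun (hasFDerivAt_Lf hπF0 hπFC φ τ).fderiv (Pi.single i 1)
  rw [hLWv, hLv]
  simp [ContinuousLinearMap.add_apply, ContinuousLinearMap.smul_apply, smul_eq_mul]
  ring

end Main


/-- Hessian decomposition of the follower objective in `φ`:
with `W_k(τ) = ∑_{j=k}^{H} γ^j R_F(s_T, x_j, b_j)` and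
`ℓ_k(φ, τ) = log π_F(φ)(b_k | x_k; s_T)`, the `(i, j)` entry of `∇²_φ J_F(θ, φ)`
decomposes as stated (assuming the follower policy is three times continuously
differentiable in `φ` so that the Hessian exists). -/
theorem follower_hessian_decomposition
    {SL AL SF AF : Type} [Fintype SL] [Fintype AL] [Fintype SF] [Fintype AF]
    [Nonempty SL] [Nonempty AL] [Nonempty SF] [Nonempty AF]
    {m n T H : ℕ} (γ : ℝ) (hγ0 : 0 < γ) (hγ1 : γ ≤ 1)
    (μL : SL → ℝ) (hμL0 : ∀ s, 0 ≤ μL s) (hμL1 : ∑ s : SL, μL s = 1)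
    (PL : SL → AL → SL → ℝ) (hPL0 : ∀ s a s', 0 ≤ PL s a s')
    (hPL1 : ∀ s a, ∑ s' : SL, PL s a s' = 1)
    (μF : SL → SF → ℝ) (hμF0 : ∀ z x, 0 ≤ μF z x) (hμF1 : ∀ z, ∑ x : SF, μF z x = 1)
    (PF : SL → SF → AF → SF → ℝ) (hPF0 : ∀ z x b x', 0 ≤ PF z x b x')
    (hPF1 : ∀ z x b, ∑ x' : SF, PF z x b x' = 1)
    (RL : SL → AL → ℝ) (RF : SL → SF → AF → ℝ)
    (πL : (Fin m → ℝ) → SL → AL → ℝ) (hπL0 : ∀ θ s a, 0 < πL θ s a)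
    (hπL1 : ∀ θ s, ∑ a : AL, πL θ s a = 1)
    (hπLC : ∀ s a, ContDiff ℝ 2 fun θ : Fin m → ℝ => πL θ s a)
    (πF : (Fin n → ℝ) → SL → SF → AF → ℝ) (hπF0 : ∀ φ z x b, 0 < πF φ z x b)
    (hπF1 : ∀ φ z x, ∑ b : AF, πF φ z x b = 1)
    (hπFC : ∀ z x b, ContDiff ℝ 2 fun φ : Fin n → ℝ => πF φ z x b)
    (hπFC3 : ∀ z x b, ContDiff ℝ 3 fun φ : Fin n → ℝ => πF φ z x b) :
    ∀ (θ : Fin m → ℝ) (φ : Fin n → ℝ) (i j : Fin n),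
      fderiv ℝ (fun φ₁ : Fin n → ℝ =>
          fderiv ℝ (fun φ₂ : Fin n → ℝ => JF γ μL PL μF PF RF πL πF T H θ φ₂) φ₁
            (Pi.single j 1)) φ (Pi.single i 1)
        =
      (∑ τ : Traj SL AL SF AF T H,
        trajProb μL PL μF PF πL πF θ φ τ *
          fderiv ℝ (fun φ₁ : Fin n → ℝ =>
            fderiv ℝ (fun φ₂ : Fin n → ℝ =>
              ∑ k : Fin (H + 1), Real.log (πF φ₂ τ.z (τ.x k) (τ.b k)) *
                ∑ j' ∈ Finset.Ici k, γ ^ (j' : ℕ) * RF τ.z (τ.x j') (τ.b j')) φ₁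
              (Pi.single j 1)) φ (Pi.single i 1))
      +
      (∑ τ : Traj SL AL SF AF T H,
        trajProb μL PL μF PF πL πF θ φ τ *
          (fderiv ℝ (fun φ₂ : Fin n → ℝ =>
              ∑ k : Fin (H + 1), Real.log (πF φ₂ τ.z (τ.x k) (τ.b k))) φ
            (Pi.single i 1) *
           fderiv ℝ (fun φ₂ : Fin n → ℝ =>
              ∑ k : Fin (H + 1), Real.log (πF φ₂ τ.z (τ.x k) (τ.b k)) *
                ∑ j' ∈ Finset.Ici k, γ ^ (j' : ℕ) * RF τ.z (τ.x j') (τ.b j')) φ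
            (Pi.single j 1))) := by
  intro θ φ i j
  exact follower_hessian_decomposition' γ μL PL μF PF hPF1 RF πL πF hπF0 hπF1 hπFC θ φ i j
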